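/- (Conditional Borel–Cantelli, limsup version.) Let (Ω̃, P̃, 𝒢, (𝒢_t)_{t≥0}) be a filtered probability space. Suppose there exist a decreasing sequence (t_n)_{n≥1} with t_n → 0 and events (A_n)_{n≥1} such that: (Z1) A_n ∈ 𝒢_{t_n} for all n; (Z2) there exist nonnegative numbers (a_n) with Σ a_n = ∞, events (G_n), and p₁ ∈ (0,1) such that P̃(G_nᶜ) ≤ p₁ and P̃(A_n | 𝒢_{t_{n+1}}) ≥ a_n·1_{G_n} almost surely, for all n. Then P̃(limsup_n A_n) ≥ 1 - p₁. -/

import Mathlib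

open MeasureTheory Filter
open scoped ENNReal

lemma key_step
    {Ω : Type*} {m0 : MeasurableSpace Ω} (μ : Measure Ω) [IsProbabilityMeasure μ]
    (𝒢 : Filtration ℝ m0) (s : ℝ)
    (A G D' : Set Ω) (a p₁ : ℝ) (ha0 : 0 ≤ a) (hp0 : 0 ≤ p₁)
    (hAmeas : MeasurableSet A) (hGmeas : MeasurableSet G)
    (hD' : MeasurableSet[𝒢 s] D')
    (hGp : μ Gᶜ ≤ ENNReal.ofReal p₁)
    (hcond : ∀ᵐ ω ∂μ, a * G.indicator (fun _ => (1:ℝ)) ω ≤ (μ[A.indicator (fun _ => (1:ℝ)) | 𝒢 s]) ω) :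
    (μ (Aᶜ ∩ D')).toReal ≤ (1 - a) * (μ D').toReal + a * p₁ := by
  have hm : 𝒢 s ≤ m0 := 𝒢.le s
  have hD'0 : MeasurableSet D' := hm _ hD'
  have hind : Integrable (A.indicator (fun _ => (1:ℝ))) μ :=
    (integrable_const (1:ℝ)).indicator hAmeas
  have e1 : ∫ ω in D', A.indicator (fun _ => (1:ℝ)) ω ∂μ = (μ (A ∩ D')).toReal := by
    rw [integral_indicator hAmeas, setIntegral_const, measureReal_def, Measure.restrict_apply hAmeas]
    simp
  have e2 : ∫ ω in D', a * G.indicator (fun _ => (1:ℝ)) ω ∂μ = a * (μ (G ∩ D')).toReal := by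
    rw [integral_const_mul, integral_indicator hGmeas, setIntegral_const,
      measureReal_def, Measure.restrict_apply hGmeas]
    simp
  have e3 : ∫ ω in D', (μ[A.indicator (fun _ => (1:ℝ)) | 𝒢 s]) ω ∂μ
      = ∫ ω in D', A.indicator (fun _ => (1:ℝ)) ω ∂μ := setIntegral_condExp hm hind hD'
  have h2 : a * (μ (G ∩ D')).toReal ≤ (μ (A ∩ D')).toReal := by
    rw [← e1, ← e3, ← e2]
    refine integral_mono_ae ?_ ?_ (ae_restrict_of_ae hcond)
    · exact (((integrable_const (1:ℝ)).indicator hGmeas).const_mul a).restrict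
    · exact integrable_condExp.restrict
  have h3 : (μ D').toReal - p₁ ≤ (μ (G ∩ D')).toReal := by
    have h4 : μ D' ≤ μ (G ∩ D') + ENNReal.ofReal p₁ := by
      calc μ D' ≤ μ ((G ∩ D') ∪ Gᶜ) := measure_mono (by intro x hx; by_cases h : x ∈ G <;> simp [h, hx])
        _ ≤ μ (G ∩ D') + μ Gᶜ := measure_union_le _ _
        _ ≤ μ (G ∩ D') + ENNReal.ofReal p₁ := add_le_add_right (hGp) _
    have h5 := ENNReal.toReal_mono (by finiteness) h4
    rw [ENNReal.toReal_add (by finiteness) (by finiteness), ENNReal.toReal_ofReal hp0] at h5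
    linarith
  have h1 : (μ (A ∩ D')).toReal + (μ (Aᶜ ∩ D')).toReal = (μ D').toReal := by
    have h6 := measure_inter_add_diff D' hAmeas (μ := μ)
    rw [Set.diff_eq, Set.inter_comm D' A, Set.inter_comm D' Aᶜ] at h6
    rw [← ENNReal.toReal_add (by finiteness) (by finiteness), h6]
  nlinarith [ENNReal.toReal_nonneg (a := μ (A ∩ D')), ENNReal.toReal_nonneg (a := μ (G ∩ D'))]

/-- Conditional Borel–Cantelli lemma (Proposition 5.1(i)): on a filtered probability space,
if `t_n` decreases to `0`, `A_n ∈ 𝒢_{t_n}`, the nonnegative `a_n` satisfy `Σ a_n = ∞`,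
`P(G_nᶜ) ≤ p₁` and `P(A_n | 𝒢_{t_{n+1}}) ≥ a_n·1_{G_n}` a.s., then
`P(limsup A_n) ≥ 1 - p₁`. -/
theorem conditional_borel_cantelli_limsup
    {Ω : Type*} {m0 : MeasurableSpace Ω} (μ : Measure Ω) [IsProbabilityMeasure μ]
    (𝒢 : Filtration ℝ m0)
    (t : ℕ → ℝ) (ht_anti : StrictAnti t) (ht_lim : Tendsto t atTop (nhds 0))
    (A G : ℕ → Set Ω) (a : ℕ → ℝ) (p₁ : ℝ) (hp₁ : 0 < p₁) (hp₁' : p₁ < 1)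
    (hA : ∀ n, MeasurableSet[𝒢 (t n)] (A n))
    (hG : ∀ n, MeasurableSet (G n))
    (ha_nonneg : ∀ n, 0 ≤ a n)
    (ha_sum : ¬ Summable a)
    (hGp : ∀ n, μ (G n)ᶜ ≤ ENNReal.ofReal p₁)
    (hcond : ∀ n, ∀ᵐ ω ∂μ,
      a n * (G n).indicator (fun _ => (1:ℝ)) ω ≤
        (μ[(A n).indicator (fun _ => (1:ℝ)) | 𝒢 (t (n+1))]) ω) :
    ENNReal.ofReal (1 - p₁) ≤ μ (limsup A atTop) := by
  have hA' : ∀ n, MeasurableSet (A n) := fun n => 𝒢.le _ _ (hA n)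
  -- each a n ≤ 1
  have ha1 : ∀ n, a n ≤ 1 := by
    intro n
    by_contra h
    push_neg at h
    have hle : (μ[(A n).indicator (fun _ => (1:ℝ)) | 𝒢 (t (n+1))]) ≤ᵐ[μ] fun _ => (1:ℝ) := by
      have h1 := condExp_mono (m := 𝒢 (t (n+1))) (μ := μ)
        ((integrable_const (1:ℝ)).indicator (hA' n)) (integrable_const (1:ℝ))
        (ae_of_all _ (fun ω => Set.indicator_le_self' (fun _ _ => zero_le_one) ω))
      have h2 := condExp_const (𝒢.le (t (n+1))) (1:ℝ) (μ := μ)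
      rw [h2] at h1
      exact h1
    have hnull : μ (G n) = 0 := by
      have : ∀ᵐ ω ∂μ, ω ∉ G n := by
        filter_upwards [hcond n, hle] with ω hω h1ω
        intro hmem
        rw [Set.indicator_of_mem hmem] at hω
        simp only [mul_one] at hω
        linarith
      simpa [ae_iff] using this
    have : (1:ℝ≥0∞) ≤ ENNReal.ofReal p₁ := by
      have := hGp n
      rwa [prob_compl_eq_one_sub (hG n), hnull, tsub_zero] at this
    exact absurd (lt_of_le_of_lt this (ENNReal.ofReal_lt_one.2 hp₁')) (lt_irrefl _)
  -- the finite intersections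
  set D : ℕ → ℕ → Set Ω := fun N M => ⋂ n ∈ Finset.Icc N M, (A n)ᶜ with hD
  have hDmeas : ∀ N M, MeasurableSet[𝒢 (t N)] (D N M) := by
    intro N M
    refine Finset.measurableSet_biInter _ (fun n hn => ?_)
    have hn' : N ≤ n := (Finset.mem_Icc.1 hn).1
    exact (𝒢.mono (ht_anti.antitone hn') _ (hA n)).compl
  have hDuniv : ∀ N M, M < N → D N M = Set.univ := by
    intro N M h
    have he : Finset.Icc N M = ∅ := Finset.Icc_eq_empty_of_lt h
    show ⋂ n ∈ Finset.Icc N M, (A n)ᶜ = Set.univ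
    rw [he]
    simp
  have key : ∀ N M, N ≤ M →
      (μ (D N M)).toReal ≤ (1 - a N) * (μ (D (N+1) M)).toReal + a N * p₁ := by
    intro N M hNM
    have hsplit : D N M = (A N)ᶜ ∩ D (N+1) M := by
      ext ω
      simp only [hD, Set.mem_iInter, Finset.mem_Icc, Set.mem_inter_iff, Set.mem_compl_iff]
      constructor
      · intro h
        exact ⟨h N ⟨le_refl N, hNM⟩, fun n hn => h n ⟨by omega, hn.2⟩⟩
      · rintro ⟨h1, h2⟩ n hn
        rcases eq_or_lt_of_le hn.1 with rfl | hlt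
        · exact h1
        · exact h2 n ⟨by omega, hn.2⟩
    rw [hsplit]
    exact key_step μ 𝒢 (t (N+1)) (A N) (G N) (D (N+1) M) (a N) p₁ (ha_nonneg N) hp₁.le
      (hA' N) (hG N) (hDmeas (N+1) M) (hGp N) (hcond N)
  -- iterate
  have ind : ∀ k N, (μ (D N (N + k))).toReal ≤ p₁ + ∏ n ∈ Finset.Icc N (N + k), (1 - a n) := by
    intro k
    induction k with
    | zero =>
      intro N
      have h0 := key N N (le_refl N)
      have h1 : D (N+1) N = Set.univ := hDuniv _ _ (by omega)
      rw [h1] at h0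
      simp only [measure_univ, ENNReal.toReal_one, mul_one] at h0
      have : a N * p₁ ≤ p₁ := by nlinarith [ha_nonneg N, ha1 N, hp₁.le]
      calc (μ (D N (N + 0))).toReal = (μ (D N N)).toReal := by norm_num
        _ ≤ (1 - a N) + a N * p₁ := h0
        _ ≤ p₁ + ∏ n ∈ Finset.Icc N (N + 0), (1 - a n) := by
            rw [Nat.add_zero, Finset.Icc_self, Finset.prod_singleton]; linarith
    | succ k ih =>
      intro N
      have hidx : N + (k + 1) = (N + 1) + k := by omega
      rw [hidx]
      have h0 := key N (N + 1 + k) (by omega)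
      have h1 := ih (N+1)
      have hins : Finset.Icc N (N+1+k) = insert N (Finset.Icc (N+1) (N+1+k)) := by
        ext x; simp only [Finset.mem_Icc, Finset.mem_insert]; omega
      have hnotmem : N ∉ Finset.Icc (N+1) (N+1+k) := by simp [Finset.mem_Icc]
      have hprodnn : (0:ℝ) ≤ ∏ n ∈ Finset.Icc (N+1) (N+1+k), (1 - a n) :=
        Finset.prod_nonneg (fun n _ => by linarith [ha1 n])
      have h1N : (0:ℝ) ≤ 1 - a N := by linarith [ha1 N]
      calc (μ (D N (N+1+k))).toReal
          ≤ (1 - a N) * (μ (D (N+1) (N+1+k))).toReal + a N * p₁ := h0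
        _ ≤ (1 - a N) * (p₁ + ∏ n ∈ Finset.Icc (N+1) (N+1+k), (1 - a n)) + a N * p₁ :=
            by nlinarith
        _ = p₁ + ∏ n ∈ Finset.Icc N (N+1+k), (1 - a n) := by
            rw [hins, Finset.prod_insert hnotmem]; ring
  -- product tends to zero
  have hsumtend : Tendsto (fun n => ∑ i ∈ Finset.range n, a i) atTop atTop :=
    (not_summable_iff_tendsto_nat_atTop_of_nonneg ha_nonneg).1 ha_sum
  have prod0 : ∀ N, Tendsto (fun k => ∏ n ∈ Finset.Icc N (N + k), (1 - a n)) atTop (nhds 0) := by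
    intro N
    have hbound : ∀ k, ∏ n ∈ Finset.Icc N (N + k), (1 - a n)
        ≤ Real.exp (-(∑ n ∈ Finset.Icc N (N + k), a n)) := by
      intro k
      calc ∏ n ∈ Finset.Icc N (N + k), (1 - a n)
          ≤ ∏ n ∈ Finset.Icc N (N + k), Real.exp (-(a n)) := by
            refine Finset.prod_le_prod (fun n _ => by linarith [ha1 n]) (fun n _ => ?_)
            have := Real.add_one_le_exp (-(a n)); linarith
        _ = Real.exp (∑ n ∈ Finset.Icc N (N + k), -(a n)) := (Real.exp_sum _ _).symm
        _ = Real.exp (-(∑ n ∈ Finset.Icc N (N + k), a n)) := by rw [Finset.sum_neg_distrib]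
    have hsum2 : Tendsto (fun k => ∑ n ∈ Finset.Icc N (N + k), a n) atTop atTop := by
      have heq : ∀ k, ∑ n ∈ Finset.Icc N (N + k), a n
          = ∑ n ∈ Finset.range (N + k + 1), a n - ∑ n ∈ Finset.range N, a n := by
        intro k
        rw [← Finset.sum_Ico_eq_sub _ (by omega)]
        congr 1
      have h3 : Tendsto (fun k => ∑ n ∈ Finset.range (k + (N+1)), a n) atTop atTop :=
        hsumtend.comp (tendsto_add_atTop_nat (N+1))
      have h4 := tendsto_atTop_add_const_right atTop (-(∑ n ∈ Finset.range N, a n)) h3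
      refine h4.congr (fun k => ?_)
      rw [heq k, show N + k + 1 = k + (N+1) from by omega, sub_eq_add_neg]
    have h2 : Tendsto (fun k => Real.exp (-(∑ n ∈ Finset.Icc N (N + k), a n))) atTop (nhds 0) :=
      Real.tendsto_exp_atBot.comp (tendsto_neg_atBot_iff.2 hsum2)
    refine squeeze_zero (fun k => Finset.prod_nonneg (fun n _ => by linarith [ha1 n])) hbound h2
  -- tail bound
  set T : ℕ → Set Ω := fun N => ⋂ (n) (_ : N ≤ n), (A n)ᶜ with hT
  have tailbound : ∀ N, μ (T N) ≤ ENNReal.ofReal p₁ := by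
    intro N
    have hle : ∀ k, (μ (T N)).toReal ≤ p₁ + ∏ n ∈ Finset.Icc N (N + k), (1 - a n) := by
      intro k
      refine le_trans ?_ (ind k N)
      have hsub : T N ⊆ D N (N + k) := by
        intro ω hω
        simp only [hD, Set.mem_iInter, Finset.mem_Icc]
        intro n hn
        exact Set.mem_iInter.1 (Set.mem_iInter.1 hω n) hn.1
      exact ENNReal.toReal_mono (by finiteness) (measure_mono hsub)
    have hlim : Tendsto (fun k => p₁ + ∏ n ∈ Finset.Icc N (N + k), (1 - a n)) atTop (nhds p₁) := by
      simpa using tendsto_const_nhds.add (prod0 N)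
    have : (μ (T N)).toReal ≤ p₁ := ge_of_tendsto hlim (Eventually.of_forall hle)
    rw [← ENNReal.ofReal_toReal (show μ (T N) ≠ ⊤ by finiteness)]
    exact ENNReal.ofReal_le_ofReal this
  -- conclusion
  have hcompl : (limsup A atTop)ᶜ = ⋃ N, T N := by
    rw [limsup_eq_iInf_iSup_of_nat]
    simp [hT, Set.compl_iInter, Set.compl_iUnion]
  have hmono : Monotone T := by
    intro N M hNM
    exact Set.iInter_mono (fun n => Set.iInter_mono' (fun h => ⟨le_trans hNM h, le_refl _⟩))
  have hUnion : μ ((limsup A atTop)ᶜ) ≤ ENNReal.ofReal p₁ := by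
    rw [hcompl, hmono.directed_le.measure_iUnion]
    exact iSup_le tailbound
  have hone : (1:ℝ≥0∞) ≤ μ (limsup A atTop) + ENNReal.ofReal p₁ := by
    calc (1:ℝ≥0∞) = μ Set.univ := (measure_univ).symm
      _ = μ (limsup A atTop ∪ (limsup A atTop)ᶜ) := by rw [Set.union_compl_self]
      _ ≤ μ (limsup A atTop) + μ ((limsup A atTop)ᶜ) := measure_union_le _ _
      _ ≤ μ (limsup A atTop) + ENNReal.ofReal p₁ := add_le_add_right hUnion _
  have hsplit1 : ENNReal.ofReal (1 - p₁) + ENNReal.ofReal p₁ = 1 := by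
    rw [← ENNReal.ofReal_add (by linarith) hp₁.le]
    norm_num
  rw [← ENNReal.add_le_add_iff_right (ENNReal.ofReal_ne_top (r := p₁)), hsplit1]
  exact hone
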